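/- For every ρ > 0 there exists a constant C > 0 (depending only on ρ) with the following property: for all r₁, r₂ > 0, all t > r₁ + r₂, and all θ ∈ ℝ, set α = (t² − r₁² − r₂²)/(2 r₁ r₂), let β ≥ 0 be the unique nonnegative real with cosh β = α, and set φ₁ = (π + θ)/ρ and φ₂ = (π − θ)/ρ. Then | (4π²ρ)^{−1} (2 r₁ r₂)^{−1/2} ∫₀^β (α − cosh s)^{−1/2} [ sin φ₁ / (cosh(s/ρ) − cos φ₁) + sin φ₂ / (cosh(s/ρ) − cos φ₂) ] ds | ≤ C (t² − (r₁ + r₂)²)^{−1/2}. -/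

import Mathlib

open MeasureTheory Real

lemma aux_inv_sqrt (x : ℝ) : x ^ (-(1/2) : ℝ) = (Real.sqrt x)⁻¹ := by
  rcases le_or_gt 0 x with h | h
  · rw [Real.sqrt_eq_rpow, ← Real.rpow_neg h]
  · rw [Real.rpow_def_of_neg h, Real.sqrt_eq_zero'.mpr h.le, inv_zero,
      show (-(1/2):ℝ) * π = -(π/2) by ring, Real.cos_neg, Real.cos_pi_div_two, mul_zero]

lemma aux_le_of_sq_le_sq {x y : ℝ} (hx : 0 ≤ x) (hy : 0 ≤ y) (h : x^2 ≤ y^2) : x ≤ y := by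
  rw [← Real.sqrt_sq hx, ← Real.sqrt_sq hy]
  exact Real.sqrt_le_sqrt h

lemma aux_sinh_lb {x : ℝ} (hx : 0 ≤ x) : x * Real.exp x / (1 + 2*x) ≤ Real.sinh x := by
  rw [Real.sinh_eq, div_le_div_iff₀ (by linarith) (by norm_num)]
  have h1 : (2*x) + 1 ≤ Real.exp (2*x) := Real.add_one_le_exp _
  have h2 : Real.exp (2*x) * Real.exp (-x) = Real.exp x := by
    rw [← Real.exp_add]; ring_nf
  have h3 : (0:ℝ) < Real.exp (-x) := Real.exp_pos _
  have h4 : (0:ℝ) < Real.exp x := Real.exp_pos _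
  nlinarith [mul_le_mul_of_nonneg_right h1 h3.le]

lemma aux_sinh_ub {x : ℝ} (hx : 0 ≤ x) : Real.sinh x ≤ x * Real.exp x := by
  rw [Real.sinh_eq]
  have h1 : (-(2*x)) + 1 ≤ Real.exp (-(2*x)) := Real.add_one_le_exp _
  have h2 : Real.exp (-(2*x)) * Real.exp x = Real.exp (-x) := by
    rw [← Real.exp_add]; ring_nf
  have h4 : (0:ℝ) < Real.exp x := Real.exp_pos _
  nlinarith [mul_le_mul_of_nonneg_right h1 h4.le]

lemma aux_sinh_ub' (x : ℝ) : Real.sinh x ≤ Real.exp x / 2 := by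
  rw [Real.sinh_eq]
  have := Real.exp_pos (-x)
  linarith

lemma aux_cosh_sub_cosh (b s : ℝ) :
    Real.cosh b - Real.cosh s = 2 * Real.sinh ((b+s)/2) * Real.sinh ((b-s)/2) := by
  have e1 : Real.cosh b = Real.cosh ((b+s)/2 + (b-s)/2) := by ring_nf
  have e2 : Real.cosh s = Real.cosh ((b+s)/2 - (b-s)/2) := by ring_nf
  rw [e1, e2, Real.cosh_add, Real.cosh_sub]; ring

lemma aux_cosh_sub_cos (x z : ℝ) :
    Real.cosh (2*x) - Real.cos (2*z) = 2*(Real.sinh x^2 + Real.sin z^2) := by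
  have h1 := Real.cosh_two_mul x
  have h2 := Real.cos_two_mul z
  have h3 := Real.cosh_sq x
  have h4 := Real.sin_sq_add_cos_sq z
  nlinarith

lemma aux_trig_bound {x ψ : ℝ} (hx : 0 < x) :
    |Real.sin (2*ψ) / (Real.cosh (2*x) - Real.cos (2*ψ))|
      ≤ |Real.sin ψ| / (|Real.sin ψ|^2 + x^2) := by
  set a := |Real.sin ψ| with ha
  have ha0 : 0 ≤ a := abs_nonneg _
  have hden : Real.cosh (2*x) - Real.cos (2*ψ) = 2*(Real.sinh x^2 + Real.sin ψ^2) :=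
    aux_cosh_sub_cos x ψ
  have hsx : x ≤ Real.sinh x := (Real.self_le_sinh_iff).mpr hx.le
  have hsx2 : x^2 ≤ Real.sinh x^2 := by nlinarith
  have hdpos : 0 < 2*(Real.sinh x^2 + Real.sin ψ^2) := by nlinarith
  have hnum : |Real.sin (2*ψ)| ≤ 2*a := by
    rw [Real.sin_two_mul, abs_mul, abs_mul]
    have h1 : |Real.cos ψ| ≤ 1 := abs_cos_le_one ψ
    have h2 : |(2:ℝ)| = 2 := by norm_num
    have h3 : |(2:ℝ)| * |Real.sin ψ| * |Real.cos ψ| ≤ 2 * a * 1 := by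
      rw [h2, ha]
      exact mul_le_mul_of_nonneg_left h1 (by positivity)
    linarith
  have hsq : a^2 = Real.sin ψ^2 := sq_abs _
  have hax : 0 < a^2 + x^2 := by nlinarith
  have hd2 : 2*(a^2 + x^2) ≤ 2*(Real.sinh x^2 + Real.sin ψ^2) := by nlinarith
  rw [abs_div, hden, abs_of_pos hdpos]
  calc |Real.sin (2*ψ)| / (2*(Real.sinh x^2 + Real.sin ψ^2))
      ≤ 2*a / (2*(a^2 + x^2)) := div_le_div₀ (by linarith) hnum (by linarith) hd2
    _ = a / (a^2+x^2) := mul_div_mul_left a _ two_ne_zero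

lemma aux_integrable_invsqrt (β : ℝ) :
    IntervalIntegrable (fun s => (Real.sqrt (β - s))⁻¹) volume 0 β := by
  have he : (fun s => (Real.sqrt (β - s))⁻¹) = fun s => (β - s) ^ (-(1/2):ℝ) :=
    funext fun s => (aux_inv_sqrt _).symm
  rw [he]
  have h := (intervalIntegral.intervalIntegrable_rpow' (r := -(1/2))
    (by norm_num) (a := 0) (b := β)).comp_sub_left β
  simpa using h.symm

lemma aux_integral_invsqrt {β : ℝ} (hβ : 0 ≤ β) :
    ∫ s in (0:ℝ)..β, (Real.sqrt (β - s))⁻¹ = 2 * Real.sqrt β := by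
  have he : ∀ s, (Real.sqrt (β - s))⁻¹ = (β - s) ^ (-(1/2):ℝ) :=
    fun s => (aux_inv_sqrt _).symm
  simp_rw [he]
  rw [intervalIntegral.integral_comp_sub_left (fun x => x ^ (-(1/2):ℝ)) β]
  simp only [sub_zero, sub_self]
  rw [integral_rpow (Or.inl (by norm_num))]
  rw [Real.sqrt_eq_rpow]
  rw [Real.zero_rpow (by norm_num : (-(1/2):ℝ)+1 ≠ 0)]
  norm_num
  ring

lemma aux_cont_h {ρ a : ℝ} (hρ : 0 < ρ) (ha : 0 ≤ a) :
    Continuous (fun s : ℝ => a/(a^2+(s/(2*ρ))^2)) := by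
  rcases eq_or_lt_of_le ha with h | h
  · simp only [← h, zero_div]
    exact continuous_const
  · exact continuous_const.div (by fun_prop) (fun s => by positivity)

lemma aux_integral_h {ρ a β : ℝ} (hρ : 0 < ρ) (ha : 0 ≤ a) (hβ : 0 ≤ β) :
    ∫ s in (0:ℝ)..β, a/(a^2+(s/(2*ρ))^2) ≤ π*ρ := by
  have hπ : 0 < π := Real.pi_pos
  rcases eq_or_lt_of_le ha with h | h
  · simp only [← h, zero_div, intervalIntegral.integral_zero]
    positivity
  · have hca : 0 < 2*ρ*a := by positivity
    have hder : ∀ s : ℝ, HasDerivAt (fun v => 2*ρ*Real.arctan (v/(2*ρ*a)))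
        (a/(a^2+(s/(2*ρ))^2)) s := by
      intro s
      have h1 := (Real.hasDerivAt_arctan (s/(2*ρ*a))).comp s
        ((hasDerivAt_id s).div_const (2*ρ*a))
      have h2 := h1.const_mul (2*ρ)
      convert h2 using 1 <;> try rfl
      field_simp
    rw [intervalIntegral.integral_eq_sub_of_hasDerivAt (fun s _ => hder s)
      ((aux_cont_h hρ ha).intervalIntegrable _ _)]
    have hb1 : Real.arctan (β/(2*ρ*a)) < π/2 := Real.arctan_lt_pi_div_two _
    have hb0 : Real.arctan (0/(2*ρ*a)) = 0 := by rw [zero_div, Real.arctan_zero]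
    rw [hb0]
    nlinarith

lemma aux_W_bound {β s : ℝ} (hβ : 0 < β) (hs : 0 < s) (hsβ : s ≤ β) :
    (Real.sqrt (Real.cosh β - Real.cosh s))⁻¹
      ≤ (Real.exp (β/4))⁻¹ * (Real.sqrt (Real.sinh (β/2)))⁻¹ * (1 + (Real.sqrt (β - s))⁻¹) := by
  have hS : 0 < Real.sinh (β/2) := Real.sinh_pos_iff.mpr (by linarith)
  rcases eq_or_lt_of_le hsβ with heq | hlt
  · rw [heq, sub_self, Real.sqrt_zero, inv_zero]
    positivity
  · obtain ⟨u, hu⟩ : ∃ u, u = β - s := ⟨β - s, rfl⟩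
    have hu0 : 0 < u := by rw [hu]; linarith
    have hD : (0:ℝ) < 1 + u := by linarith
    have m1 : Real.sinh (β/2) * Real.exp (s/2) ≤ Real.sinh ((β+s)/2) := by
      have e : (β+s)/2 = β/2 + s/2 := by ring
      rw [e, Real.sinh_add]
      have hcs : Real.sinh (β/2) ≤ Real.cosh (β/2) := by
        nlinarith [Real.cosh_sub_sinh (β/2), Real.exp_pos (-(β/2))]
      have hss : 0 ≤ Real.sinh (s/2) := Real.sinh_nonneg_iff.mpr (by linarith)
      have hcc : 0 ≤ Real.cosh (s/2) := (Real.cosh_pos (x := s/2)).le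
      nlinarith [Real.cosh_add_sinh (s/2)]
    have m2 : (u/2) * Real.exp (u/2) ≤ Real.sinh (u/2) * (1 + u) := by
      have h := aux_sinh_lb (x := u/2) (by linarith)
      rw [show 1 + 2*(u/2) = 1 + u by ring, div_le_iff₀ hD] at h
      exact h
    have m1n : 0 ≤ Real.sinh (β/2) * Real.exp (s/2) := by positivity
    have hexp : Real.exp (s/2) * Real.exp (u/2) = Real.exp (β/2) := by
      rw [← Real.exp_add]; congr 1; rw [hu]; ring
    have lb : Real.sinh (β/2) * Real.exp (β/2) * u / (1+u) ≤ Real.cosh β - Real.cosh s := by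
      rw [aux_cosh_sub_cosh β s, ← hu, div_le_iff₀ hD]
      have hp := mul_le_mul m1 m2 (by positivity) (m1n.trans m1)
      have e3 : Real.sinh (β/2) * Real.exp (s/2) * ((u/2) * Real.exp (u/2))
          = Real.sinh (β/2) * Real.exp (β/2) * u / 2 := by
        rw [← hexp]; ring
      rw [e3] at hp
      nlinarith [hp]
    have hlbpos : 0 < Real.sinh (β/2) * Real.exp (β/2) * u / (1+u) := by positivity
    have step1 : (Real.sqrt (Real.cosh β - Real.cosh s))⁻¹
        ≤ (Real.sqrt (Real.sinh (β/2) * Real.exp (β/2) * u / (1+u)))⁻¹ := by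
      apply inv_anti₀ (Real.sqrt_pos.mpr hlbpos)
      exact Real.sqrt_le_sqrt lb
    refine step1.trans ?_
    have hEsq : Real.exp (β/2) = (Real.exp (β/4))^2 := by
      rw [pow_two, ← Real.exp_add]; congr 1; ring
    have hsqrt : Real.sqrt (Real.sinh (β/2) * Real.exp (β/2) * u / (1+u))
        = Real.sqrt (Real.sinh (β/2)) * Real.exp (β/4) * Real.sqrt u / Real.sqrt (1+u) := by
      rw [Real.sqrt_div (by positivity), Real.sqrt_mul (by positivity),
        Real.sqrt_mul hS.le, hEsq, Real.sqrt_sq (Real.exp_pos _).le]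
    rw [hsqrt, ← hu, inv_div]
    have hsu : 0 < Real.sqrt u := Real.sqrt_pos.mpr hu0
    have h1u : 0 < Real.sqrt (1+u) := Real.sqrt_pos.mpr hD
    have hsub : Real.sqrt (1+u) ≤ 1 + Real.sqrt u := by
      have h := Real.sqrt_le_sqrt (show 1+u ≤ (1+Real.sqrt u)^2 by
        nlinarith [Real.sq_sqrt hu0.le, Real.sqrt_nonneg u])
      rwa [Real.sqrt_sq (by positivity)] at h
    have hT : 0 < Real.sqrt (Real.sinh (β/2)) := Real.sqrt_pos.mpr hS
    have hE : 0 < Real.exp (β/4) := Real.exp_pos _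
    rw [div_le_iff₀ (by positivity : (0:ℝ) < Real.sqrt (Real.sinh (β/2)) * Real.exp (β/4) * Real.sqrt u)]
    have heq : (Real.exp (β/4))⁻¹ * (Real.sqrt (Real.sinh (β/2)))⁻¹ * (1 + (Real.sqrt u)⁻¹)
        * (Real.sqrt (Real.sinh (β/2)) * Real.exp (β/4) * Real.sqrt u) = 1 + Real.sqrt u := by
      field_simp
      ring
    rw [heq]
    linarith [hsub]

lemma aux_half {a y : ℝ} (ha : 0 ≤ a) (hy : 0 < y) : a/(a^2+y^2) ≤ 1/(2*y) := by
  rw [div_le_div_iff₀ (by positivity) (by positivity)]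
  nlinarith [sq_nonneg (a-y)]

lemma aux_hterm {ρ s β a : ℝ} (hρ : 0 < ρ) (hβ0 : 0 < β) (hc : β/2 < s) (ha : 0 ≤ a) :
    a/(a^2+(s/(2*ρ))^2) ≤ 2*ρ/β := by
  have hs0' : 0 < s := lt_of_le_of_lt (by linarith) hc
  have hx : 0 < s/(2*ρ) := by positivity
  have h0 := aux_half ha hx
  have he : 1/(2*(s/(2*ρ))) = ρ/s := by
    field_simp
  have h2 : ρ/s ≤ 2*ρ/β := by
    rw [div_le_div_iff₀ hs0' hβ0]
    nlinarith
  exact h0.trans (he ▸ h2)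

set_option maxHeartbeats 1000000 in
/-- Lemma 3.3: pointwise bound on the diffractive part of the wave kernel on
the flat cone `C(S¹_ρ)`. -/
theorem stmt_1 : ∀ ρ : ℝ, 0 < ρ → ∃ C > (0:ℝ),
    ∀ r₁ r₂ : ℝ, 0 < r₁ → 0 < r₂ → ∀ t : ℝ, r₁ + r₂ < t → ∀ θ : ℝ,
    ∀ β : ℝ, 0 ≤ β → Real.cosh β = (t^2 - r₁^2 - r₂^2) / (2 * r₁ * r₂) →
    |((4 * π^2 * ρ)⁻¹ * (2 * r₁ * r₂) ^ (-(1/2) : ℝ)) *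
      ∫ s in (0:ℝ)..β,
        ((t^2 - r₁^2 - r₂^2) / (2 * r₁ * r₂) - Real.cosh s) ^ (-(1/2) : ℝ) *
          (Real.sin ((π + θ) / ρ) / (Real.cosh (s / ρ) - Real.cos ((π + θ) / ρ)) +
           Real.sin ((π - θ) / ρ) / (Real.cosh (s / ρ) - Real.cos ((π - θ) / ρ)))|
      ≤ C * (t^2 - (r₁ + r₂)^2) ^ (-(1/2) : ℝ) := by
  intro ρ hρ
  have hπ : (0:ℝ) < π := Real.pi_pos
  have hs2 : (0:ℝ) < Real.sqrt 2 := by positivity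
  refine ⟨(2*π + 2*Real.sqrt 2*π + 8)/(4*π^2), by positivity, ?_⟩
  intro r₁ r₂ hr₁ hr₂ t ht θ β hβ hcosh
  have hrr : (0:ℝ) < 2*r₁*r₂ := by positivity
  have ht0 : (0:ℝ) < t := lt_trans (by positivity) ht
  have htt : (r₁+r₂)^2 < t^2 := by nlinarith
  have hα1 : 1 < Real.cosh β := by
    rw [hcosh, lt_div_iff₀ hrr]; nlinarith
  have hβ0 : 0 < β := by
    rcases hβ.eq_or_lt with h | h
    · exfalso; rw [← h, Real.cosh_zero] at hα1; exact lt_irrefl 1 hα1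
    · exact h
  have hS : 0 < Real.sinh (β/2) := Real.sinh_pos_iff.mpr (by linarith)
  have hEpos : (0:ℝ) < Real.exp (β/4) := Real.exp_pos _
  have hTpos : (0:ℝ) < Real.sqrt (Real.sinh (β/2)) := Real.sqrt_pos.mpr hS
  have hbpos : (0:ℝ) < Real.sqrt β := Real.sqrt_pos.mpr hβ0
  have hb2 : Real.sqrt β ^ 2 = β := Real.sq_sqrt hβ
  have hT2 : Real.sqrt (Real.sinh (β/2)) ^ 2 = Real.sinh (β/2) := Real.sq_sqrt hS.le
  -- abbreviations
  obtain ⟨a₁, ha₁⟩ : ∃ a, a = |Real.sin ((π+θ)/(2*ρ))| := ⟨_, rfl⟩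
  obtain ⟨a₂, ha₂⟩ : ∃ a, a = |Real.sin ((π-θ)/(2*ρ))| := ⟨_, rfl⟩
  have ha₁0 : 0 ≤ a₁ := ha₁ ▸ abs_nonneg _
  have ha₂0 : 0 ≤ a₂ := ha₂ ▸ abs_nonneg _
  obtain ⟨H, hH⟩ : ∃ H : ℝ → ℝ,
      H = fun s => a₁/(a₁^2+(s/(2*ρ))^2) + a₂/(a₂^2+(s/(2*ρ))^2) := ⟨_, rfl⟩
  obtain ⟨F, hF⟩ : ∃ F : ℝ → ℝ, F = fun s => (Real.sqrt (β - s))⁻¹ := ⟨_, rfl⟩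
  obtain ⟨M, hM⟩ : ∃ M : ℝ,
      M = (Real.exp (β/4))⁻¹ * (Real.sqrt (Real.sinh (β/2)))⁻¹ := ⟨_, rfl⟩
  obtain ⟨Q, hQdef⟩ : ∃ Q : ℝ, Q = (2*Real.sqrt 2*π + 8)*ρ := ⟨_, rfl⟩
  have hM0 : 0 ≤ M := by rw [hM]; positivity
  have hQ0 : 0 ≤ Q := by rw [hQdef]; positivity
  have hH0 : ∀ s, 0 ≤ H s := by
    intro s; rw [hH]
    exact add_nonneg (div_nonneg ha₁0 (by positivity)) (div_nonneg ha₂0 (by positivity))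
  have hF0 : ∀ s, 0 ≤ F s := by intro s; rw [hF]; positivity
  have hHcont : Continuous H := by
    rw [hH]; exact (aux_cont_h hρ ha₁0).add (aux_cont_h hρ ha₂0)
  have hintH : IntervalIntegrable H volume 0 β := hHcont.intervalIntegrable 0 β
  have hintF : IntervalIntegrable F volume 0 β := by
    rw [hF]; exact aux_integrable_invsqrt β
  have hintFH : IntervalIntegrable (fun s => F s * H s) volume 0 β :=
    hintF.mul_continuousOn hHcont.continuousOn
  -- pointwise bound on the integrand
  have hkey : ∀ s ∈ Set.uIoc (0:ℝ) β,
      ‖(Real.sqrt (Real.cosh β - Real.cosh s))⁻¹ *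
        (Real.sin ((π + θ) / ρ) / (Real.cosh (s / ρ) - Real.cos ((π + θ) / ρ)) +
         Real.sin ((π - θ) / ρ) / (Real.cosh (s / ρ) - Real.cos ((π - θ) / ρ)))‖
        ≤ M * H s + M * (F s * H s) := by
    intro s hs
    rw [Set.uIoc_of_le hβ] at hs
    obtain ⟨hs0, hsβ⟩ := hs
    have hx : 0 < s/(2*ρ) := by positivity
    have e1 : (π + θ) / ρ = 2*((π+θ)/(2*ρ)) := by field_simp
    have e2 : (π - θ) / ρ = 2*((π-θ)/(2*ρ)) := by field_simp
    have e3 : s / ρ = 2*(s/(2*ρ)) := by field_simp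
    have ht1 := aux_trig_bound (x := s/(2*ρ)) (ψ := (π+θ)/(2*ρ)) hx
    have ht2 := aux_trig_bound (x := s/(2*ρ)) (ψ := (π-θ)/(2*ρ)) hx
    rw [← e1, ← e3, ← ha₁] at ht1
    rw [← e2, ← e3, ← ha₂] at ht2
    have hGH : |Real.sin ((π + θ) / ρ) / (Real.cosh (s / ρ) - Real.cos ((π + θ) / ρ)) +
         Real.sin ((π - θ) / ρ) / (Real.cosh (s / ρ) - Real.cos ((π - θ) / ρ))| ≤ H s := by
      rw [hH]
      calc |Real.sin ((π + θ) / ρ) / (Real.cosh (s / ρ) - Real.cos ((π + θ) / ρ)) +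
         Real.sin ((π - θ) / ρ) / (Real.cosh (s / ρ) - Real.cos ((π - θ) / ρ))|
          ≤ |Real.sin ((π + θ) / ρ) / (Real.cosh (s / ρ) - Real.cos ((π + θ) / ρ))| +
            |Real.sin ((π - θ) / ρ) / (Real.cosh (s / ρ) - Real.cos ((π - θ) / ρ))| :=
            abs_add_le _ _
        _ ≤ a₁/(a₁^2+(s/(2*ρ))^2) + a₂/(a₂^2+(s/(2*ρ))^2) := add_le_add ht1 ht2
    have hW := aux_W_bound hβ0 hs0 hsβ
    have hW' : (Real.sqrt (Real.cosh β - Real.cosh s))⁻¹ ≤ M * (1 + F s) := by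
      rw [hM, hF]; exact hW
    rw [Real.norm_eq_abs, abs_mul,
      abs_of_nonneg (inv_nonneg.mpr (Real.sqrt_nonneg _))]
    calc (Real.sqrt (Real.cosh β - Real.cosh s))⁻¹ *
          |Real.sin ((π + θ) / ρ) / (Real.cosh (s / ρ) - Real.cos ((π + θ) / ρ)) +
           Real.sin ((π - θ) / ρ) / (Real.cosh (s / ρ) - Real.cos ((π - θ) / ρ))|
        ≤ (M * (1 + F s)) * H s :=
          mul_le_mul hW' hGH (abs_nonneg _)
            (mul_nonneg hM0 (by linarith [hF0 s]))
      _ = M * H s + M * (F s * H s) := by ring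
  -- the integral bound
  have hintg : IntervalIntegrable (fun s => M * H s + M * (F s * H s)) volume 0 β :=
    (hintH.const_mul M).add (hintFH.const_mul M)
  have hbound1 : |∫ s in (0:ℝ)..β,
      (Real.sqrt (Real.cosh β - Real.cosh s))⁻¹ *
        (Real.sin ((π + θ) / ρ) / (Real.cosh (s / ρ) - Real.cos ((π + θ) / ρ)) +
         Real.sin ((π - θ) / ρ) / (Real.cosh (s / ρ) - Real.cos ((π - θ) / ρ)))|
      ≤ |∫ s in (0:ℝ)..β, (M * H s + M * (F s * H s))| := by
    have h := intervalIntegral.norm_integral_le_of_norm_le (μ := volume) (a := (0:ℝ)) (b := β)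
      (f := fun s => (Real.sqrt (Real.cosh β - Real.cosh s))⁻¹ *
        (Real.sin ((π + θ) / ρ) / (Real.cosh (s / ρ) - Real.cos ((π + θ) / ρ)) +
         Real.sin ((π - θ) / ρ) / (Real.cosh (s / ρ) - Real.cos ((π - θ) / ρ))))
      (g := fun s => M * H s + M * (F s * H s))
      hβ (Filter.Eventually.of_forall (fun s hs => hkey s (by rw [Set.uIoc_of_le hβ]; exact hs))) hintg
    simpa [Real.norm_eq_abs] using h.trans (le_abs_self _)
  -- integral of H
  have hIH : ∫ s in (0:ℝ)..β, H s ≤ 2*(π*ρ) := by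
    simp only [hH]
    rw [intervalIntegral.integral_add
      ((aux_cont_h hρ ha₁0).intervalIntegrable 0 β)
      ((aux_cont_h hρ ha₂0).intervalIntegrable 0 β)]
    have i1 := aux_integral_h hρ ha₁0 hβ
    have i2 := aux_integral_h hρ ha₂0 hβ
    linarith
  have hIH0 : 0 ≤ ∫ s in (0:ℝ)..β, H s :=
    intervalIntegral.integral_nonneg hβ (fun u _ => hH0 u)
  -- pointwise split bound for F * H
  have hpw : ∀ s ∈ Set.Icc (0:ℝ) β,
      F s * H s ≤ Real.sqrt 2 * (Real.sqrt β)⁻¹ * H s + (4*ρ/β) * F s := by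
    intro s hs
    obtain ⟨hs0, hsβ⟩ := hs
    rcases le_or_gt s (β/2) with hc | hc
    · have hF' : F s ≤ Real.sqrt 2 * (Real.sqrt β)⁻¹ := by
        rw [hF]
        have h1 : Real.sqrt (β/2) ≤ Real.sqrt (β - s) := Real.sqrt_le_sqrt (by linarith)
        have h2 : 0 < Real.sqrt (β/2) := Real.sqrt_pos.mpr (by linarith)
        have h3 := inv_anti₀ h2 h1
        refine h3.trans (le_of_eq ?_)
        rw [Real.sqrt_div hβ, inv_div, div_eq_mul_inv]
      have k1 : F s * H s ≤ Real.sqrt 2 * (Real.sqrt β)⁻¹ * H s :=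
        mul_le_mul_of_nonneg_right hF' (hH0 s)
      have k2 : 0 ≤ (4*ρ/β) * F s :=
        mul_nonneg (by positivity) (hF0 s)
      linarith
    · have hs0' : 0 < s := by linarith
      have hterm : ∀ a : ℝ, 0 ≤ a → a/(a^2+(s/(2*ρ))^2) ≤ 2*ρ/β :=
        fun a ha => aux_hterm hρ hβ0 hc ha
      have hH' : H s ≤ 4*ρ/β := by
        simp only [hH]
        have hx : a₁/(a₁^2+(s/(2*ρ))^2) + a₂/(a₂^2+(s/(2*ρ))^2) ≤ 2*ρ/β + 2*ρ/β :=
          add_le_add (hterm a₁ ha₁0) (hterm a₂ ha₂0)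
        exact hx.trans (le_of_eq (by ring))
      have k1 : F s * H s ≤ F s * (4*ρ/β) :=
        mul_le_mul_of_nonneg_left hH' (hF0 s)
      have k2 : 0 ≤ Real.sqrt 2 * (Real.sqrt β)⁻¹ * H s :=
        mul_nonneg (by positivity) (hH0 s)
      nlinarith [k1, k2]
  have hIF : ∫ s in (0:ℝ)..β, F s = 2 * Real.sqrt β := by
    rw [hF]; exact aux_integral_invsqrt hβ
  have hIFH : ∫ s in (0:ℝ)..β, F s * H s ≤ Q * (Real.sqrt β)⁻¹ := by
    have mono := intervalIntegral.integral_mono_on hβ hintFH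
      ((hintH.const_mul _).add (hintF.const_mul _)) hpw
    rw [intervalIntegral.integral_add (hintH.const_mul _) (hintF.const_mul _),
      intervalIntegral.integral_const_mul, intervalIntegral.integral_const_mul, hIF] at mono
    refine mono.trans ?_
    have k1 : Real.sqrt 2 * (Real.sqrt β)⁻¹ * ∫ s in (0:ℝ)..β, H s
        ≤ Real.sqrt 2 * (Real.sqrt β)⁻¹ * (2*(π*ρ)) :=
      mul_le_mul_of_nonneg_left hIH (by positivity)
    have k2 : (4*ρ/β) * (2*Real.sqrt β) = 8*ρ*(Real.sqrt β)⁻¹ := by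
      field_simp; linear_combination 8 * hb2
    rw [hQdef]
    have k3 : Real.sqrt 2 * (Real.sqrt β)⁻¹ * (2*(π*ρ)) + 8*ρ*(Real.sqrt β)⁻¹
        = ((2*Real.sqrt 2*π + 8)*ρ) * (Real.sqrt β)⁻¹ := by ring
    linarith [k1, k2.le, k2.ge]
  -- total bound on the integral
  have hP : |∫ s in (0:ℝ)..β,
      (Real.sqrt (Real.cosh β - Real.cosh s))⁻¹ *
        (Real.sin ((π + θ) / ρ) / (Real.cosh (s / ρ) - Real.cos ((π + θ) / ρ)) +
         Real.sin ((π - θ) / ρ) / (Real.cosh (s / ρ) - Real.cos ((π - θ) / ρ)))|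
      ≤ M*(2*(π*ρ)) + M*(Q*(Real.sqrt β)⁻¹) := by
    refine hbound1.trans ?_
    have hg0 : 0 ≤ ∫ s in (0:ℝ)..β, (M * H s + M * (F s * H s)) :=
      intervalIntegral.integral_nonneg hβ (fun u _ =>
        add_nonneg (mul_nonneg hM0 (hH0 u))
          (mul_nonneg hM0 (mul_nonneg (hF0 u) (hH0 u))))
    rw [abs_of_nonneg hg0,
      intervalIntegral.integral_add (hintH.const_mul M) (hintFH.const_mul M),
      intervalIntegral.integral_const_mul, intervalIntegral.integral_const_mul]
    exact add_le_add (mul_le_mul_of_nonneg_left hIH hM0)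
      (mul_le_mul_of_nonneg_left hIFH hM0)
  -- scalar estimates
  have hEsq : Real.exp (β/2) = (Real.exp (β/4))^2 := by
    rw [pow_two, ← Real.exp_add]; congr 1; ring
  have hTle : Real.sqrt 2 * Real.sqrt (Real.sinh (β/2)) ≤ Real.exp (β/4) := by
    apply aux_le_of_sq_le_sq (by positivity) hEpos.le
    have h1 : Real.sinh (β/2) ≤ Real.exp (β/2)/2 := aux_sinh_ub' _
    have h2 : (Real.sqrt 2 * Real.sqrt (Real.sinh (β/2)))^2
        = 2 * Real.sinh (β/2) := by
      rw [mul_pow, Real.sq_sqrt (by norm_num : (0:ℝ) ≤ 2), hT2]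
    rw [h2, ← hEsq]
    linarith
  have hTbE : Real.sqrt 2 * Real.sqrt (Real.sinh (β/2)) ≤ Real.sqrt β * Real.exp (β/4) := by
    apply aux_le_of_sq_le_sq (by positivity) (by positivity)
    have h1 : Real.sinh (β/2) ≤ (β/2) * Real.exp (β/2) := by
      have := aux_sinh_ub (x := β/2) (by linarith)
      linarith
    have h2 : (Real.sqrt 2 * Real.sqrt (Real.sinh (β/2)))^2
        = 2 * Real.sinh (β/2) := by
      rw [mul_pow, Real.sq_sqrt (by norm_num : (0:ℝ) ≤ 2), hT2]
    have h3 : (Real.sqrt β * Real.exp (β/4))^2 = β * Real.exp (β/2) := by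
      rw [mul_pow, hb2, ← hEsq]
    rw [h2, h3]
    nlinarith [Real.exp_pos (β/2)]
  have key2 : Real.sqrt 2 * Real.sqrt (Real.sinh (β/2)) * (2*(π*ρ) + Q * (Real.sqrt β)⁻¹)
      ≤ (2*(π*ρ) + Q) * Real.exp (β/4) := by
    have k1 : 2*(π*ρ)*(Real.sqrt 2 * Real.sqrt (Real.sinh (β/2)))
        ≤ 2*(π*ρ)*Real.exp (β/4) :=
      mul_le_mul_of_nonneg_left hTle (by positivity)
    have k2 : Real.sqrt 2 * Real.sqrt (Real.sinh (β/2)) * (Real.sqrt β)⁻¹ ≤ Real.exp (β/4) := by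
      rw [← div_eq_mul_inv, div_le_iff₀ hbpos]
      nlinarith [hTbE]
    have k3 : Q * (Real.sqrt 2 * Real.sqrt (Real.sinh (β/2)) * (Real.sqrt β)⁻¹)
        ≤ Q * Real.exp (β/4) :=
      mul_le_mul_of_nonneg_left k2 hQ0
    nlinarith [k1, k3]
  -- rewrite the right-hand side
  have hfact : t^2 - (r₁+r₂)^2 = (2*r₁*r₂) * (Real.cosh β - 1) := by
    rw [hcosh]; field_simp; ring
  have hcb : Real.cosh β - 1 = 2 * Real.sinh (β/2)^2 := by
    conv_lhs => rw [show β = 2*(β/2) by ring]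
    rw [Real.cosh_two_mul, Real.cosh_sq]
    ring
  have hsqrtRHS : Real.sqrt (t^2 - (r₁+r₂)^2)
      = Real.sqrt (2*r₁*r₂) * (Real.sqrt 2 * Real.sinh (β/2)) := by
    rw [hfact, hcb, Real.sqrt_mul hrr.le, Real.sqrt_mul (by norm_num : (0:ℝ) ≤ 2),
      Real.sqrt_sq hS.le, mul_assoc]
  -- core scalar inequality
  have hcore : (4*π^2*ρ)⁻¹ * (M*(2*(π*ρ)) + M*(Q*(Real.sqrt β)⁻¹))
      ≤ ((2*π + 2*Real.sqrt 2*π + 8)/(4*π^2)) * (Real.sqrt 2 * Real.sinh (β/2))⁻¹ := by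
    rw [hM]
    have e1 : (4*π^2*ρ)⁻¹ * ((Real.exp (β/4))⁻¹ * (Real.sqrt (Real.sinh (β/2)))⁻¹*(2*(π*ρ))
          + (Real.exp (β/4))⁻¹ * (Real.sqrt (Real.sinh (β/2)))⁻¹*(Q*(Real.sqrt β)⁻¹))
        = (2*(π*ρ) + Q*(Real.sqrt β)⁻¹)
          / (4*π^2*ρ*(Real.exp (β/4) * Real.sqrt (Real.sinh (β/2)))) := by
      field_simp
    have e2 : ((2*π + 2*Real.sqrt 2*π + 8)/(4*π^2)) * (Real.sqrt 2 * Real.sinh (β/2))⁻¹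
        = ((2*π + 2*Real.sqrt 2*π + 8)/(4*π^2))
          / (Real.sqrt 2 * Real.sqrt (Real.sinh (β/2))^2) := by
      rw [hT2]; exact (div_eq_mul_inv _ _).symm
    rw [e1, e2, div_div, div_le_div_iff₀ (by positivity) (by positivity)]
    have hkey3 := mul_le_mul_of_nonneg_left key2 hTpos.le
    calc (2*(π*ρ) + Q*(Real.sqrt β)⁻¹) * (4*π^2*(Real.sqrt 2*Real.sqrt (Real.sinh (β/2))^2))
        = 4*π^2 * (Real.sqrt (Real.sinh (β/2)) *
            (Real.sqrt 2 * Real.sqrt (Real.sinh (β/2)) * (2*(π*ρ) + Q*(Real.sqrt β)⁻¹))) := by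
          ring
      _ ≤ 4*π^2 * (Real.sqrt (Real.sinh (β/2)) * ((2*(π*ρ) + Q) * Real.exp (β/4))) := by
          have h4 : (0:ℝ) ≤ 4*π^2 := by positivity
          exact mul_le_mul_of_nonneg_left hkey3 h4
      _ = (2*π + 2*Real.sqrt 2*π + 8) * (4*π^2*ρ*(Real.exp (β/4) * Real.sqrt (Real.sinh (β/2)))) := by
          rw [hQdef]; ring
  -- assemble
  simp only [← hcosh, aux_inv_sqrt]
  rw [abs_mul,
    abs_of_nonneg (show (0:ℝ) ≤ (4*π^2*ρ)⁻¹ * (Real.sqrt (2*r₁*r₂))⁻¹ by positivity)]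
  calc (4*π^2*ρ)⁻¹ * (Real.sqrt (2*r₁*r₂))⁻¹ * |∫ s in (0:ℝ)..β,
        (Real.sqrt (Real.cosh β - Real.cosh s))⁻¹ *
          (Real.sin ((π + θ) / ρ) / (Real.cosh (s / ρ) - Real.cos ((π + θ) / ρ)) +
           Real.sin ((π - θ) / ρ) / (Real.cosh (s / ρ) - Real.cos ((π - θ) / ρ)))|
      ≤ (4*π^2*ρ)⁻¹ * (Real.sqrt (2*r₁*r₂))⁻¹ * (M*(2*(π*ρ)) + M*(Q*(Real.sqrt β)⁻¹)) :=
        mul_le_mul_of_nonneg_left hP (by positivity)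
    _ ≤ (2*π + 2*Real.sqrt 2*π + 8)/(4*π^2) * (Real.sqrt (t^2 - (r₁+r₂)^2))⁻¹ := by
        rw [hsqrtRHS]
        have h := mul_le_mul_of_nonneg_left hcore
          (inv_nonneg.mpr (Real.sqrt_nonneg (2*r₁*r₂)))
        calc (4*π^2*ρ)⁻¹ * (Real.sqrt (2*r₁*r₂))⁻¹ * (M*(2*(π*ρ)) + M*(Q*(Real.sqrt β)⁻¹))
            = (Real.sqrt (2*r₁*r₂))⁻¹ *
              ((4*π^2*ρ)⁻¹ * (M*(2*(π*ρ)) + M*(Q*(Real.sqrt β)⁻¹))) := by ring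
          _ ≤ (Real.sqrt (2*r₁*r₂))⁻¹ *
              ((2*π + 2*Real.sqrt 2*π + 8)/(4*π^2) * (Real.sqrt 2 * Real.sinh (β/2))⁻¹) := h
          _ = (2*π + 2*Real.sqrt 2*π + 8)/(4*π^2) *
              (Real.sqrt (2*r₁*r₂) * (Real.sqrt 2 * Real.sinh (β/2)))⁻¹ := by
                rw [mul_inv]; ring
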